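/- Let p be a prime and k ≥ 2 an integer; let n = p^k and let G be the cyclic subgroup of (Z_n)^× generated by the unit e = p^{k−1} + 1. For x ∈ Z_n let xG = {x·g : g ∈ G}. Then (i) the number of distinct cosets {xG : x ∈ Z_n} equals 2p^{k−1} − p^{k−2}, and (ii) for every nonzero α ∈ Z_n, the cardinality of {x ∈ Z_n : (x+α)G = xG} lies in {0, p^k − p^{k−1}}; in particular the coset index function is a (p^k, 2p^{k−1}−p^{k−2}, {0, p^k−p^{k−1}}) zero-difference function. -/

import Mathlib

/-- The coset (orbit) `xG = {x * g : g ∈ G}` of `x : R` under a subgroup `G` of `Rˣ`. -/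
def coset {R : Type*} [Monoid R] (G : Subgroup Rˣ) (x : R) : Set R :=
  {y | ∃ g ∈ G, y = x * (g : R)}

lemma stmt16_unit_natCast {p : ℕ} (hp : p.Prime) {r : ℕ} (hr : 0 < r) (m : ℕ) :
    IsUnit ((m : ZMod (p ^ r))) ↔ ¬ p ∣ m := by
  rw [ZMod.isUnit_iff_coprime, Nat.coprime_pow_right_iff hr, Nat.coprime_comm,
    hp.coprime_iff_not_dvd]

lemma stmt16_unit_set_ncard (m : ℕ) [NeZero m] :
    {x : ZMod m | IsUnit x}.ncard = Nat.totient m := by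
  have h1 : {x : ZMod m | IsUnit x} = Set.range (Units.val : (ZMod m)ˣ → ZMod m) := by
    ext x; exact Iff.rfl
  rw [h1, ← Set.image_univ, Set.ncard_image_of_injective _ Units.val_injective, Set.ncard_univ,
    Nat.card_eq_fintype_card, ZMod.card_units_eq_totient]

theorem stmt_16 (p : ℕ) (hp : p.Prime) (k : ℕ) (hk : 2 ≤ k)
    (e : (ZMod (p ^ k))ˣ)
    (he : (e : ZMod (p ^ k)) = (p : ZMod (p ^ k)) ^ (k - 1) + 1) :
    {S : Set (ZMod (p ^ k)) | ∃ x : ZMod (p ^ k), S = coset (Subgroup.zpowers e) x}.ncard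
        = 2 * p ^ (k - 1) - p ^ (k - 2) ∧
      ∀ α : ZMod (p ^ k), α ≠ 0 →
        {x : ZMod (p ^ k) |
            coset (Subgroup.zpowers e) (x + α) = coset (Subgroup.zpowers e) x}.ncard
          ∈ ({0, p ^ k - p ^ (k - 1)} : Set ℕ) := by
  obtain ⟨j, rfl⟩ : ∃ j, k = j + 2 := ⟨k - 2, by omega⟩
  clear hk
  have h1 : j + 2 - 1 = j + 1 := rfl
  have h2 : j + 2 - 2 = j := rfl
  rw [h1] at he
  rw [h1, h2]
  haveI : NeZero (p ^ (j + 2)) := ⟨pow_ne_zero _ hp.pos.ne'⟩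
  haveI : NeZero (p ^ (j + 1)) := ⟨pow_ne_zero _ hp.pos.ne'⟩
  set G := Subgroup.zpowers e with hG
  set q : ZMod (p ^ (j + 2)) := (p : ZMod (p ^ (j + 2))) ^ (j + 1) with hq
  -- basic facts about q
  have hq0 : (p : ZMod (p ^ (j + 2))) ^ (j + 2) = 0 := by
    have := ZMod.natCast_self (p ^ (j + 2))
    push_cast at this
    exact this
  have hq2 : q * q = 0 := by
    have h : q * q = (p : ZMod (p ^ (j + 2))) ^ (j + 2) * (p : ZMod (p ^ (j + 2))) ^ j := by
      rw [hq, ← pow_add, ← pow_add]; congr 1; omega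
    rw [h, hq0, zero_mul]
  have hpq : (p : ZMod (p ^ (j + 2))) * q = 0 := by
    have h : (p : ZMod (p ^ (j + 2))) * q = (p : ZMod (p ^ (j + 2))) ^ (j + 2) := by
      rw [hq, ← pow_succ']
    rw [h, hq0]
  have hqfac : q = (p : ZMod (p ^ (j + 2))) * (p : ZMod (p ^ (j + 2))) ^ j := by
    rw [hq, ← pow_succ']
  have hqne : q ≠ 0 := by
    intro h
    rw [hq] at h
    have h' : ((p ^ (j + 1) : ℕ) : ZMod (p ^ (j + 2))) = 0 := by push_cast; exact h
    rw [ZMod.natCast_eq_zero_iff] at h'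
    rw [Nat.pow_dvd_pow_iff_le_right hp.one_lt] at h'
    omega
  -- unit criterion
  have hdvd : ∀ x : ZMod (p ^ (j + 2)), ((p : ZMod (p ^ (j + 2))) ∣ x ↔ p ∣ x.val) := by
    intro x
    have hvp : (p : ZMod (p ^ (j + 2))).val = p := by
      rw [ZMod.val_natCast, Nat.mod_eq_of_lt]
      calc p = p ^ 1 := (pow_one p).symm
        _ < p ^ (j + 2) := Nat.pow_lt_pow_right hp.one_lt (by omega)
    have hpn : p ∣ p ^ (j + 2) := dvd_pow_self p (by omega)
    constructor
    · rintro ⟨c, rfl⟩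
      rw [ZMod.val_mul, hvp]
      exact (Nat.dvd_mod_iff hpn).2 ⟨c.val, rfl⟩
    · rintro ⟨c, hc⟩
      have hx : ((x.val : ℕ) : ZMod (p ^ (j + 2))) = x := by
        rw [ZMod.natCast_val, ZMod.cast_id]
      exact ⟨(c : ZMod (p ^ (j + 2))), by rw [← hx, hc]; push_cast; ring⟩
  have hu : ∀ x : ZMod (p ^ (j + 2)), IsUnit x ↔ ¬ (p : ZMod (p ^ (j + 2))) ∣ x := by
    intro x
    have hx : ((x.val : ℕ) : ZMod (p ^ (j + 2))) = x := by
      rw [ZMod.natCast_val, ZMod.cast_id]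
    rw [← hx, stmt16_unit_natCast hp (by omega : 0 < j + 2) x.val, hx, hdvd]
  -- powers of e
  have he' : (e : ZMod (p ^ (j + 2))) = 1 + q := by rw [he]; ring
  have hpow : ∀ m : ℕ, ((e ^ m : (ZMod (p ^ (j + 2)))ˣ) : ZMod (p ^ (j + 2)))
      = 1 + (m : ZMod (p ^ (j + 2))) * q := by
    intro m
    induction m with
    | zero => simp
    | succ m ih =>
      rw [pow_succ e m, Units.val_mul, ih, he']
      have hcalc : (1 + (m : ZMod (p ^ (j + 2))) * q) * (1 + q)
          = 1 + ((m : ZMod (p ^ (j + 2))) + 1) * q + (m : ZMod (p ^ (j + 2))) * (q * q) := by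
        ring
      rw [hcalc, hq2]
      push_cast
      ring
  have hinv : ∀ m : ℕ, (((e ^ m)⁻¹ : (ZMod (p ^ (j + 2)))ˣ) : ZMod (p ^ (j + 2)))
      = 1 - (m : ZMod (p ^ (j + 2))) * q := by
    intro m
    apply Units.inv_eq_of_mul_eq_one_right
    rw [hpow]
    have hcalc : (1 + (m : ZMod (p ^ (j + 2))) * q) * (1 - (m : ZMod (p ^ (j + 2))) * q)
        = 1 - (m : ZMod (p ^ (j + 2))) * (m : ZMod (p ^ (j + 2))) * (q * q) := by ring
    rw [hcalc, hq2]
    ring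
  have hmem : ∀ g ∈ G, ∃ t : ZMod (p ^ (j + 2)), (g : ZMod (p ^ (j + 2))) = 1 + q * t := by
    intro g hg
    obtain ⟨m, rfl⟩ := Subgroup.mem_zpowers_iff.mp hg
    cases m with
    | ofNat a =>
      refine ⟨(a : ZMod (p ^ (j + 2))), ?_⟩
      rw [Int.ofNat_eq_coe, zpow_natCast, hpow]
      ring
    | negSucc a =>
      refine ⟨-((a : ZMod (p ^ (j + 2))) + 1), ?_⟩
      rw [zpow_negSucc, hinv]
      push_cast
      ring
  have hmem' : ∀ t : ZMod (p ^ (j + 2)), ∃ g ∈ G, (g : ZMod (p ^ (j + 2))) = 1 + q * t := by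
    intro t
    refine ⟨e ^ t.val, ?_, ?_⟩
    · exact Subgroup.mem_zpowers_iff.mpr ⟨(t.val : ℤ), by rw [zpow_natCast]⟩
    · rw [hpow]
      have hx : ((t.val : ℕ) : ZMod (p ^ (j + 2))) = t := by
        rw [ZMod.natCast_val, ZMod.cast_id]
      rw [hx]; ring
  -- coset description
  have hcoset : ∀ x : ZMod (p ^ (j + 2)),
      coset G x = {y | ∃ t : ZMod (p ^ (j + 2)), y = x + x * q * t} := by
    intro x
    ext y
    simp only [coset, Set.mem_setOf_eq]
    constructor
    · rintro ⟨g, hg, rfl⟩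
      obtain ⟨t, ht⟩ := hmem g hg
      exact ⟨t, by rw [ht]; ring⟩
    · rintro ⟨t, rfl⟩
      obtain ⟨g, hg, hgt⟩ := hmem' t
      exact ⟨g, hg, by rw [hgt]; ring⟩
  have hself : ∀ x : ZMod (p ^ (j + 2)), x ∈ coset G x := fun x => ⟨1, one_mem _, by simp⟩
  have hsing : ∀ x : ZMod (p ^ (j + 2)), ¬ IsUnit x → coset G x = {x} := by
    intro x hx
    have hpx : (p : ZMod (p ^ (j + 2))) ∣ x := by
      by_contra h
      exact hx ((hu x).mpr h)
    obtain ⟨c, rfl⟩ := hpx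
    have hxq : (p : ZMod (p ^ (j + 2))) * c * q = 0 := by
      have h : (p : ZMod (p ^ (j + 2))) * c * q = c * ((p : ZMod (p ^ (j + 2))) * q) := by ring
      rw [h, hpq, mul_zero]
    rw [hcoset]
    ext y
    simp [hxq]
  -- the projection map
  have hdvd' : p ^ (j + 1) ∣ p ^ (j + 2) := pow_dvd_pow p (by omega)
  set π : ZMod (p ^ (j + 2)) →+* ZMod (p ^ (j + 1)) :=
    ZMod.castHom hdvd' (ZMod (p ^ (j + 1))) with hπ
  have hπq : π q = 0 := by
    rw [hq, map_pow, map_natCast]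
    have h := ZMod.natCast_self (p ^ (j + 1))
    push_cast at h
    exact h
  have hker : ∀ z : ZMod (p ^ (j + 2)), π z = 0 ↔ ∃ s : ZMod (p ^ (j + 2)), z = q * s := by
    intro z
    constructor
    · intro hz
      have hzv : ((z.val : ℕ) : ZMod (p ^ (j + 1))) = 0 := by
        rw [← hz, hπ, ZMod.castHom_apply, ZMod.natCast_val]
      rw [ZMod.natCast_eq_zero_iff] at hzv
      obtain ⟨c, hc⟩ := hzv
      have hx : ((z.val : ℕ) : ZMod (p ^ (j + 2))) = z := by
        rw [ZMod.natCast_val, ZMod.cast_id]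
      exact ⟨(c : ZMod (p ^ (j + 2))), by rw [← hx, hc]; push_cast; rw [hq]⟩
    · rintro ⟨s, rfl⟩
      rw [map_mul, hπq, zero_mul]
  have hπeq : ∀ x y : ZMod (p ^ (j + 2)), π x = π y ↔ ∃ s, y = x + q * s := by
    intro x y
    constructor
    · intro h
      have hz : π (y - x) = 0 := by rw [map_sub, h, sub_self]
      obtain ⟨s, hs⟩ := (hker _).mp hz
      exact ⟨s, by linear_combination hs⟩
    · rintro ⟨s, rfl⟩
      rw [map_add, map_mul, hπq, zero_mul, add_zero]
  have hπsurj : ∀ u : ZMod (p ^ (j + 1)), π ((u.val : ℕ) : ZMod (p ^ (j + 2))) = u := by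
    intro u
    rw [map_natCast, ZMod.natCast_val, ZMod.cast_id]
  have hpreim : ∀ x : ZMod (p ^ (j + 2)), IsUnit x → coset G x = π ⁻¹' {π x} := by
    intro x hx
    rw [hcoset]
    ext y
    simp only [Set.mem_setOf_eq, Set.mem_preimage, Set.mem_singleton_iff]
    constructor
    · rintro ⟨t, rfl⟩
      rw [map_add, map_mul, map_mul, hπq, mul_zero, zero_mul, add_zero]
    · intro hy
      obtain ⟨s, hs⟩ := (hπeq x y).mp hy.symm
      refine ⟨(hx.unit⁻¹ : (ZMod (p ^ (j + 2)))ˣ) * s, ?_⟩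
      have hxu : x * ((hx.unit⁻¹ : (ZMod (p ^ (j + 2)))ˣ) : ZMod (p ^ (j + 2))) = 1 := by
        have hxx := hx.unit.mul_inv
        rw [hx.unit_spec] at hxx
        exact hxx
      linear_combination hs - q * s * hxu
  have hcc : ∀ x y : ZMod (p ^ (j + 2)), IsUnit x → IsUnit y →
      (coset G x = coset G y ↔ π x = π y) := by
    intro x y hx hy
    rw [hpreim x hx, hpreim y hy]
    constructor
    · intro h
      have hx' : x ∈ π ⁻¹' {π x} := Set.mem_preimage.mpr rfl
      rw [h] at hx'
      exact hx'
    · intro h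
      rw [h]
  -- totient arithmetic
  have htot : Nat.totient (p ^ (j + 2)) = p ^ (j + 2) - p ^ (j + 1) := by
    rw [Nat.totient_prime_pow hp (by omega : 0 < j + 2)]
    have h : p ^ (j + 2 - 1) * (p - 1) = p ^ (j + 1) * p - p ^ (j + 1) * 1 := by
      rw [h1, Nat.mul_sub]
    rw [h, mul_one, ← pow_succ]
  have htot' : Nat.totient (p ^ (j + 1)) = p ^ (j + 1) - p ^ j := by
    rw [Nat.totient_prime_pow hp (by omega : 0 < j + 1)]
    have h3 : j + 1 - 1 = j := rfl
    rw [h3, Nat.mul_sub, mul_one, ← pow_succ]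
  set A : Set (Set (ZMod (p ^ (j + 2)))) :=
    (fun x : ZMod (p ^ (j + 2)) => ({x} : Set (ZMod (p ^ (j + 2))))) ''
      {x : ZMod (p ^ (j + 2)) | ¬ IsUnit x} with hA
  set B : Set (Set (ZMod (p ^ (j + 2)))) :=
    (fun u : ZMod (p ^ (j + 1)) => π ⁻¹' {u}) '' {u : ZMod (p ^ (j + 1)) | IsUnit u} with hB
  have hSAB : {S : Set (ZMod (p ^ (j + 2))) | ∃ x, S = coset G x} = A ∪ B := by
    ext s
    simp only [hA, hB, Set.mem_setOf_eq, Set.mem_union, Set.mem_image]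
    constructor
    · rintro ⟨x, rfl⟩
      by_cases hx : IsUnit x
      · exact Or.inr ⟨π x, hx.map π, (hpreim x hx).symm⟩
      · exact Or.inl ⟨x, hx, (hsing x hx).symm⟩
    · rintro (⟨x, hx, rfl⟩ | ⟨u, hu', rfl⟩)
      · exact ⟨x, (hsing x hx).symm⟩
      · refine ⟨((u.val : ℕ) : ZMod (p ^ (j + 2))), ?_⟩
        have hxu2 : ((u.val : ℕ) : ZMod (p ^ (j + 1))) = u := by
          rw [ZMod.natCast_val, ZMod.cast_id]
        have hx : IsUnit ((u.val : ℕ) : ZMod (p ^ (j + 2))) := by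
          rw [stmt16_unit_natCast hp (by omega : 0 < j + 2) u.val]
          intro hdu
          have hnu : ¬ IsUnit u := by
            rw [← hxu2, stmt16_unit_natCast hp (by omega : 0 < j + 1) u.val]
            exact fun h => h hdu
          exact hnu hu'
        rw [hpreim _ hx, hπsurj]
  have hfinA : A.Finite := Set.toFinite A
  have hfinB : B.Finite := Set.toFinite B
  have hdisj : Disjoint A B := by
    rw [Set.disjoint_left]
    rintro s ⟨x, hx, rfl⟩ ⟨u, hu', heq⟩
    have hz : ((u.val : ℕ) : ZMod (p ^ (j + 2))) ∈ π ⁻¹' {u} := by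
      simp only [Set.mem_preimage, Set.mem_singleton_iff, hπsurj]
    have hz' : ((u.val : ℕ) : ZMod (p ^ (j + 2))) + q ∈ π ⁻¹' {u} := by
      simp only [Set.mem_preimage, Set.mem_singleton_iff, map_add, hπq, add_zero, hπsurj]
    have heq' : ⇑π ⁻¹' {u} = ({x} : Set (ZMod (p ^ (j + 2)))) := heq
    rw [heq'] at hz hz'
    rw [Set.mem_singleton_iff] at hz hz'
    apply hqne
    rw [hz] at hz'
    linear_combination hz'
  have hcardA : A.ncard = p ^ (j + 1) := by
    rw [hA, Set.ncard_image_of_injective _ Set.singleton_injective]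
    have hsplit : {x : ZMod (p ^ (j + 2)) | ¬ IsUnit x}
        = Set.univ \ {x : ZMod (p ^ (j + 2)) | IsUnit x} := by
      ext x; simp
    rw [hsplit, Set.ncard_diff (Set.subset_univ _), Set.ncard_univ, stmt16_unit_set_ncard, htot]
    have hcard : Nat.card (ZMod (p ^ (j + 2))) = p ^ (j + 2) := by
      rw [Nat.card_eq_fintype_card, ZMod.card]
    rw [hcard]
    have hle : p ^ (j + 1) ≤ p ^ (j + 2) := Nat.pow_le_pow_right hp.pos (by omega)
    omega
  have hcardB : B.ncard = p ^ (j + 1) - p ^ j := by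
    rw [hB]
    have hinj : Function.Injective (fun u : ZMod (p ^ (j + 1)) => π ⁻¹' {u}) := by
      intro u v huv
      have hz : ((u.val : ℕ) : ZMod (p ^ (j + 2))) ∈ π ⁻¹' {u} := by
        simp only [Set.mem_preimage, Set.mem_singleton_iff, hπsurj]
      simp only at huv
      rw [huv] at hz
      simp only [Set.mem_preimage, Set.mem_singleton_iff, hπsurj] at hz
      exact hz
    rw [Set.ncard_image_of_injective _ hinj, stmt16_unit_set_ncard, htot']
  constructor
  · rw [hSAB, Set.ncard_union_eq hdisj hfinA hfinB, hcardA, hcardB]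
    have hle : p ^ j ≤ p ^ (j + 1) := Nat.pow_le_pow_right hp.pos (by omega)
    omega
  · intro α hα
    by_cases hqα : ∃ t : ZMod (p ^ (j + 2)), α = q * t
    · obtain ⟨t, ht⟩ := hqα
      have hpα : (p : ZMod (p ^ (j + 2))) ∣ α :=
        ⟨(p : ZMod (p ^ (j + 2))) ^ j * t, by rw [ht, hqfac]; ring⟩
      have hxa_unit : ∀ x : ZMod (p ^ (j + 2)), IsUnit (x + α) ↔ IsUnit x := by
        intro x
        rw [hu (x + α), hu x, add_comm x α, dvd_add_right hpα]
      have hTeq : {x : ZMod (p ^ (j + 2)) | coset G (x + α) = coset G x}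
          = {x : ZMod (p ^ (j + 2)) | IsUnit x} := by
        ext x
        simp only [Set.mem_setOf_eq]
        constructor
        · intro hcx
          by_contra hx
          rw [hsing x hx] at hcx
          have hm := hself (x + α)
          rw [hcx, Set.mem_singleton_iff] at hm
          exact hα (add_eq_left.mp hm)
        · intro hx
          have hxa := (hxa_unit x).mpr hx
          rw [hcc _ _ hxa hx]
          exact ((hπeq x (x + α)).mpr ⟨t, by rw [ht]⟩).symm
      rw [hTeq, stmt16_unit_set_ncard, htot]
      simp
    · have hTeq : {x : ZMod (p ^ (j + 2)) | coset G (x + α) = coset G x} = ∅ := by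
        ext x
        simp only [Set.mem_setOf_eq, Set.mem_empty_iff_false, iff_false]
        intro hcx
        by_cases hx : IsUnit x
        · by_cases hxa : IsUnit (x + α)
          · obtain ⟨s, hs⟩ := (hπeq (x + α) x).mp ((hcc _ _ hxa hx).mp hcx)
            exact hqα ⟨-s, by linear_combination -hs⟩
          · rw [hsing _ hxa] at hcx
            have hm := hself x
            rw [← hcx, Set.mem_singleton_iff] at hm
            apply hα
            linear_combination -hm
        · rw [hsing x hx] at hcx
          have hm := hself (x + α)
          rw [hcx, Set.mem_singleton_iff] at hm
          exact hα (add_eq_left.mp hm)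
      rw [hTeq]
      simp
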